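/- Let U ⊂ ℝ² be open, let x₀ ∈ U, and let g : U → ℝ be continuous on U and harmonic on U \ {x₀}. Then g is harmonic on all of U. -/

import Mathlib

noncomputable section
open MeasureTheory Metric Filter Topology Set
open scoped ENNReal NNReal

abbrev R2 := EuclideanSpace ℝ (Fin 2)

/-- The partial derivative `∂_i f` of `f : ℝ² → ℝ`. -/
def pd (i : Fin 2) (f : R2 → ℝ) (x : R2) : ℝ := fderiv ℝ f x (EuclideanSpace.single i 1)

/-- `f` is harmonic on the open set `U`: twice continuously differentiable with `Δf = 0`. -/
def HarmonicOnSet (U : Set R2) (f : R2 → ℝ) : Prop :=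
  ContDiffOn ℝ 2 f U ∧ ∀ x ∈ U, pd 0 (pd 0 f) x + pd 1 (pd 1 f) x = 0

namespace HarmonicAux

open Complex

/-- x-partial of a function on ℂ. -/
def px (G : ℂ → ℝ) (w : ℂ) : ℝ := fderiv ℝ G w 1
/-- y-partial of a function on ℂ. -/
def py (G : ℂ → ℝ) (w : ℂ) : ℝ := fderiv ℝ G w Complex.I
/-- The Wirtinger-type holomorphic derivative candidate `∂G/∂x - i ∂G/∂y`. -/
def hol (G : ℂ → ℝ) (w : ℂ) : ℂ := (px G w : ℂ) - (py G w : ℂ) * Complex.I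
/-- The Laplacian of `G : ℂ → ℝ`. -/
def lap (G : ℂ → ℝ) (w : ℂ) : ℝ :=
  fderiv ℝ (px G) w 1 + fderiv ℝ (py G) w Complex.I

/-- Two `ℝ`-linear maps on `ℂ` agreeing on `1` and `I` agree. -/
lemma clm_ext_complex {E : Type*} [NormedAddCommGroup E] [NormedSpace ℝ E]
    {L M : ℂ →L[ℝ] E} (h1 : L 1 = M 1) (hI : L Complex.I = M Complex.I) : L = M := by
  ext z
  have hz : z = z.re • (1 : ℂ) + z.im • Complex.I := by
    simp [Complex.real_smul, Complex.re_add_im]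
  rw [hz]
  simp only [map_add, ContinuousLinearMap.map_smul, h1, hI]

/-- CR equations: a `C²` function with zero Laplacian has holomorphic `∂x - i ∂y`. -/
lemma differentiableOn_hol {G : ℂ → ℝ} {V : Set ℂ} (hV : IsOpen V)
    (hG : ContDiffOn ℝ 2 G V) (hlap : ∀ w ∈ V, lap G w = 0) :
    DifferentiableOn ℂ (hol G) V := by
  intro w hw
  suffices h : DifferentiableAt ℂ (hol G) w from h.differentiableWithinAt
  have hG1 : ContDiffOn ℝ 1 (fderiv ℝ G) V := hG.fderiv_of_isOpen hV (by norm_num)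
  have hdf : DifferentiableAt ℝ (fderiv ℝ G) w :=
    ((hG1.differentiableOn one_ne_zero) w hw).differentiableAt (hV.mem_nhds hw)
  set f'' := fderiv ℝ (fderiv ℝ G) w with hf''def
  have hdf' : HasFDerivAt (fderiv ℝ G) f'' w := hdf.hasFDerivAt
  have hev : ∀ᶠ y in 𝓝 w, HasFDerivAt G (fderiv ℝ G y) y := by
    filter_upwards [hV.mem_nhds hw] with y hy
    exact (((hG.differentiableOn (by norm_num)) y hy).differentiableAt
      (hV.mem_nhds hy)).hasFDerivAt
  have hsymm : f'' Complex.I 1 = f'' 1 Complex.I :=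
    second_derivative_symmetric_of_eventually hev hdf' Complex.I 1
  have hpx : HasFDerivAt (px G) ((ContinuousLinearMap.apply ℝ ℝ (1 : ℂ)).comp f'') w :=
    ((ContinuousLinearMap.apply ℝ ℝ (1 : ℂ)).hasFDerivAt).comp w hdf'
  have hpy : HasFDerivAt (py G) ((ContinuousLinearMap.apply ℝ ℝ (Complex.I)).comp f'') w :=
    ((ContinuousLinearMap.apply ℝ ℝ (Complex.I)).hasFDerivAt).comp w hdf'
  have e1 : fderiv ℝ (px G) w 1 = f'' 1 1 := by rw [hpx.fderiv]; rfl
  have e2 : fderiv ℝ (py G) w Complex.I = f'' Complex.I Complex.I := by rw [hpy.fderiv]; rfl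
  have hlapw : f'' 1 1 + f'' Complex.I Complex.I = 0 := by
    have := hlap w hw
    rw [lap, e1, e2] at this
    exact this
  have h1 : HasFDerivAt (fun y => ((px G y : ℝ) : ℂ))
      (Complex.ofRealCLM.comp ((ContinuousLinearMap.apply ℝ ℝ (1 : ℂ)).comp f'')) w :=
    (Complex.ofRealCLM.hasFDerivAt).comp w hpx
  have h2 : HasFDerivAt (fun y => ((py G y : ℝ) : ℂ))
      (Complex.ofRealCLM.comp ((ContinuousLinearMap.apply ℝ ℝ (Complex.I)).comp f'')) w :=
    (Complex.ofRealCLM.hasFDerivAt).comp w hpy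
  have h2' : HasFDerivAt (fun y => Complex.I • ((py G y : ℝ) : ℂ))
      (Complex.I • (Complex.ofRealCLM.comp
        ((ContinuousLinearMap.apply ℝ ℝ (Complex.I)).comp f''))) w := h2.const_smul Complex.I
  have hfun : (hol G) = fun y => ((px G y : ℂ)) - Complex.I • ((py G y : ℂ)) := by
    funext y
    simp [hol, smul_eq_mul, mul_comm]
  have hL : HasFDerivAt (hol G)
      ((Complex.ofRealCLM.comp ((ContinuousLinearMap.apply ℝ ℝ (1 : ℂ)).comp f'')) -
        Complex.I • (Complex.ofRealCLM.comp
          ((ContinuousLinearMap.apply ℝ ℝ (Complex.I)).comp f''))) w := by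
    rw [hfun]; exact h1.sub h2'
  set cc : ℂ := ((f'' 1 1 : ℝ) : ℂ) - ((f'' 1 Complex.I : ℝ) : ℂ) * Complex.I with hcc
  have heq : ((cc • (1 : ℂ →L[ℂ] ℂ)).restrictScalars ℝ) =
      ((Complex.ofRealCLM.comp ((ContinuousLinearMap.apply ℝ ℝ (1 : ℂ)).comp f'')) -
        Complex.I • (Complex.ofRealCLM.comp
          ((ContinuousLinearMap.apply ℝ ℝ (Complex.I)).comp f''))) := by
    have hII : f'' Complex.I Complex.I = -(f'' 1 1) := by linarith
    apply clm_ext_complex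
    · show cc • (1 : ℂ) = _
      simp only [ContinuousLinearMap.sub_apply, ContinuousLinearMap.smul_apply,
        ContinuousLinearMap.coe_comp', Function.comp_apply,
        ContinuousLinearMap.apply_apply, Complex.ofRealCLM_apply, smul_eq_mul, hcc]
      ring
    · show cc • Complex.I = _
      simp only [ContinuousLinearMap.sub_apply, ContinuousLinearMap.smul_apply,
        ContinuousLinearMap.coe_comp', Function.comp_apply,
        ContinuousLinearMap.apply_apply, Complex.ofRealCLM_apply, smul_eq_mul, hcc,
        hsymm, hII, Complex.ofReal_neg]
      ring_nf
      rw [Complex.I_sq]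
      ring
  exact (hasFDerivAt_of_restrictScalars ℝ hL heq).differentiableAt

set_option maxHeartbeats 1000000 in
/-- Primitive of a holomorphic function on a disk. -/
lemma exists_primitive {f : ℂ → ℂ} {c : ℂ} {R : ℝ≥0} (hR : 0 < R)
    (hf : DifferentiableOn ℂ f (closedBall c R)) :
    ∃ F : ℂ → ℂ, ∀ z ∈ ball c (R : ℝ), HasDerivAt F (f z) z := by
  have hp : HasFPowerSeriesOnBall f (cauchyPowerSeries f c R) c R :=
    hf.hasFPowerSeriesOnBall hR
  obtain ⟨p, hp⟩ : ∃ p, HasFPowerSeriesOnBall f p c R := ⟨_, hp⟩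
  refine ⟨fun w => ∑' n, (p.coeff n / ((n : ℂ) + 1)) * (w - c) ^ (n + 1), ?_⟩
  intro z hz
  have hz' : ‖z - c‖ < (R : ℝ) := by simpa [mem_ball, dist_eq_norm] using hz
  set r : ℝ := (‖z - c‖ + R) / 2 with hrdef
  have hr1 : ‖z - c‖ < r := by rw [hrdef]; linarith
  have hr2 : r < R := by rw [hrdef]; linarith
  have hr0 : 0 < r := lt_of_le_of_lt (norm_nonneg _) hr1
  set rnn : ℝ≥0 := ⟨r, hr0.le⟩ with hrnn
  have hrad : (rnn : ℝ≥0∞) < p.radius := by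
    refine lt_of_lt_of_le ?_ hp.r_le
    rw [ENNReal.coe_lt_coe]
    exact_mod_cast hr2
  have hsum : Summable fun n => ‖p n‖ * r ^ n := by
    have := p.summable_norm_mul_pow hrad
    exact this
  have hg : ∀ (n : ℕ), ∀ w ∈ ball c r,
      HasDerivAt (fun w => (p.coeff n / ((n : ℂ) + 1)) * (w - c) ^ (n + 1))
        (p.coeff n * (w - c) ^ n) w := by
    intro n w _
    have h0 : HasDerivAt (fun w : ℂ => w - c) 1 w := (hasDerivAt_id w).sub_const c
    have hbase := h0.pow (n + 1)
    simp only [Nat.add_sub_cancel, Nat.cast_add, Nat.cast_one, mul_one] at hbase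
    have hmul := hbase.const_mul (p.coeff n / ((n : ℂ) + 1))
    have hne : ((n : ℂ) + 1) ≠ 0 := Nat.cast_add_one_ne_zero n
    rw [← mul_assoc, div_mul_cancel₀ _ hne] at hmul
    exact hmul
  have hg' : ∀ (n : ℕ), ∀ w ∈ ball c r, ‖p.coeff n * (w - c) ^ n‖ ≤ ‖p n‖ * r ^ n := by
    intro n w hw
    have hwle : ‖w - c‖ ≤ r := by
      rw [mem_ball, dist_eq_norm] at hw
      exact hw.le
    rw [norm_mul, norm_pow, FormalMultilinearSeries.norm_apply_eq_norm_coef]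
    have h1 : ‖w - c‖ ^ n ≤ r ^ n := pow_le_pow_left₀ (norm_nonneg _) hwle n
    exact mul_le_mul_of_nonneg_left h1 (norm_nonneg _)
  have hg0 : Summable fun n => (p.coeff n / ((n : ℂ) + 1)) * ((c : ℂ) - c) ^ (n + 1) := by
    have : (fun n => (p.coeff n / ((n : ℂ) + 1)) * ((c : ℂ) - c) ^ (n + 1))
        = fun _ => (0 : ℂ) := by
      funext n
      simp [sub_self, zero_pow (Nat.succ_ne_zero n)]
    rw [this]
    exact summable_zero
  have key := hasDerivAt_tsum_of_isPreconnected hsum isOpen_ball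
    (convex_ball c r).isPreconnected hg hg' (mem_ball_self hr0) hg0
    (by rw [mem_ball, dist_eq_norm]; exact hr1)
  have hmem : (z - c) ∈ Metric.eball (0 : ℂ) (R : ℝ≥0∞) := by
    rw [EMetric.mem_ball, edist_zero_right]
    exact_mod_cast hz'
  have hs := hp.hasSum hmem
  have heq : ∑' n, p.coeff n * (z - c) ^ n = f z := by
    have h1 : (fun n => p n fun _ => z - c) = fun n => p.coeff n * (z - c) ^ n := by
      funext n
      rw [FormalMultilinearSeries.apply_eq_pow_smul_coeff, smul_eq_mul]
      ring
    rw [← h1, hs.tsum_eq]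
    congr 1
    abel
  rw [heq] at key
  exact key

/-- If `F' = hol G` then `G - Re F` has zero derivative. -/
lemma hasFDerivAt_sub_re_zero {G : ℂ → ℝ} {F : ℂ → ℂ} {z : ℂ}
    (hG : DifferentiableAt ℝ G z) (hF : HasDerivAt F (hol G z) z) :
    HasFDerivAt (fun w => G w - (F w).re) (0 : ℂ →L[ℝ] ℝ) z := by
  have hG' : HasFDerivAt G (fderiv ℝ G z) z := hG.hasFDerivAt
  have hFr : HasFDerivAt F
      ((ContinuousLinearMap.smulRight (1 : ℂ →L[ℂ] ℂ) (hol G z)).restrictScalars ℝ) z :=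
    (hF.hasFDerivAt).restrictScalars ℝ
  have hRe : HasFDerivAt (fun w => (F w).re)
      (Complex.reCLM.comp
        ((ContinuousLinearMap.smulRight (1 : ℂ →L[ℂ] ℂ) (hol G z)).restrictScalars ℝ)) z :=
    (Complex.reCLM.hasFDerivAt).comp z hFr
  have key : Complex.reCLM.comp
      ((ContinuousLinearMap.smulRight (1 : ℂ →L[ℂ] ℂ) (hol G z)).restrictScalars ℝ)
      = fderiv ℝ G z := by
    apply clm_ext_complex
    · simp [hol, px, Complex.sub_re, Complex.mul_re]
    · simp [hol, py, Complex.sub_re, Complex.mul_re, Complex.mul_im]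
  rw [key] at hRe
  have := hG'.sub hRe
  rwa [sub_self] at this

/-- Borel–Carathéodory style derivative estimate via the Schwarz lemma. -/
lemma norm_deriv_le_of_re_le {F : ℂ → ℂ} {z : ℂ} {s M : ℝ} {d : ℂ} (hs : 0 < s) (hM : 0 < M)
    (hF : DifferentiableOn ℂ F (ball z s)) (hRe : ∀ w ∈ ball z s, (F w - F z).re ≤ M)
    (hd : HasDerivAt F d z) : ‖d‖ ≤ 3 * M / s := by
  set φ : ℂ → ℂ := fun w => (F w - F z) / (((3 * M : ℝ) : ℂ) - (F w - F z)) with hφ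
  have hden : ∀ w ∈ ball z s, (((3 * M : ℝ) : ℂ) - (F w - F z)) ≠ 0 := by
    intro w hw h
    have h0 : ((((3 * M : ℝ) : ℂ)) - (F w - F z)).re = 0 := by rw [h]; simp
    rw [Complex.sub_re, Complex.ofReal_re] at h0
    have := hRe w hw
    linarith
  have hφd : DifferentiableOn ℂ φ (ball z s) := by
    apply DifferentiableOn.div
    · exact hF.sub (differentiableOn_const _)
    · exact (differentiableOn_const _).sub (hF.sub (differentiableOn_const _))
    · exact hden
  have hφz : φ z = 0 := by simp [hφ]
  have hmaps : MapsTo φ (ball z s) (ball (φ z) 1) := by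
    rw [hφz]
    intro w hw
    rw [mem_ball, dist_zero_right, hφ]
    dsimp only
    rw [norm_div, div_lt_one (norm_pos_iff.2 (hden w hw))]
    have hre : (F w - F z).re ≤ M := hRe w hw
    have h1 : Complex.normSq (F w - F z) <
        Complex.normSq (((3 * M : ℝ) : ℂ) - (F w - F z)) := by
      simp only [Complex.normSq_apply, Complex.sub_re, Complex.sub_im,
        Complex.ofReal_re, Complex.ofReal_im]
      nlinarith [Complex.sub_re (F w) (F z), Complex.sub_im (F w) (F z)]
    have h2 : ‖F w - F z‖ < ‖((3 * M : ℝ) : ℂ) - (F w - F z)‖ := by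
      rw [Complex.norm_def, Complex.norm_def]
      exact Real.sqrt_lt_sqrt (Complex.normSq_nonneg _) h1
    simpa using h2
  have hSch : ‖deriv φ z‖ ≤ 1 / s := Complex.norm_deriv_le_div_of_mapsTo_ball hφd (hmaps.mono_right ball_subset_closedBall) hs
  have hu : HasDerivAt (fun w => F w - F z) d z := hd.sub_const _
  have hv : HasDerivAt (fun w => ((3 * M : ℝ) : ℂ) - (F w - F z)) (0 - d) z :=
    (hasDerivAt_const z _).sub hu
  have hvz : ((3 * M : ℝ) : ℂ) - (F z - F z) ≠ 0 := by
    rw [sub_self, sub_zero]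
    exact_mod_cast (by positivity : (3 * M : ℝ) ≠ 0)
  have hdiv := hu.div hv hvz
  have h3M : ((3 * M : ℝ) : ℂ) ≠ 0 := by
    exact_mod_cast (by positivity : (3 * M : ℝ) ≠ 0)
  have hval : deriv φ z = d / ((3 * M : ℝ) : ℂ) := by
    rw [hφ, (show HasDerivAt (fun w => (F w - F z) / (((3 * M : ℝ) : ℂ) - (F w - F z))) _ z from hdiv).deriv]
    rw [sub_self, sub_zero, zero_mul, sub_zero]
    have hM0 : ((M : ℝ) : ℂ) ≠ 0 := by exact_mod_cast hM.ne'
    field_simp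
  rw [hval] at hSch
  have hnorm : ‖d / ((3 * M : ℝ) : ℂ)‖ = ‖d‖ / (3 * M) := by
    rw [norm_div, Complex.norm_real, Real.norm_eq_abs, abs_of_pos (by positivity)]
  rw [hnorm, div_le_div_iff₀ (by positivity) hs] at hSch
  -- hSch : ‖d‖ * s ≤ 1 * (3 * M)
  rw [le_div_iff₀ hs]
  linarith

/-- A punctured ball in `ℂ` is preconnected. -/
lemma isPreconnected_punctured_ball (c : ℂ) (R : ℝ) :
    IsPreconnected (ball c R \ {c}) := by
  rcases le_or_gt R 0 with hR | hR
  · have : ball c R = ∅ := ball_eq_empty.2 hR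
    rw [this]; simpa using isPreconnected_empty
  have hrank : 1 < Module.rank ℝ ℂ :=
    Complex.rank_real_complex ▸ Nat.one_lt_ofNat
  have hsph : IsPreconnected (sphere (0 : ℂ) 1) :=
    (isConnected_sphere hrank 0 zero_le_one).isPreconnected
  have hprod : IsPreconnected ((Ioo (0 : ℝ) R) ×ˢ (sphere (0 : ℂ) 1)) :=
    isPreconnected_Ioo.prod hsph
  have hcont : Continuous fun p : ℝ × ℂ => c + p.1 • p.2 := by fun_prop
  have himg : (fun p : ℝ × ℂ => c + p.1 • p.2) '' ((Ioo (0 : ℝ) R) ×ˢ (sphere (0 : ℂ) 1))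
      = ball c R \ {c} := by
    apply Subset.antisymm
    · rintro - ⟨⟨t, y⟩, ⟨⟨ht0, htR⟩, hy⟩, rfl⟩
      have hy1 : ‖y‖ = 1 := by simpa using hy
      have hn : ‖t • y‖ = t := by
        rw [norm_smul, hy1, mul_one, Real.norm_eq_abs, abs_of_pos ht0]
      constructor
      · simp only [mem_ball, dist_eq_norm]
        rw [add_sub_cancel_left, hn]; exact htR
      · simp only [mem_singleton_iff]
        intro h
        have : t • y = 0 := by
          have := congrArg (fun w => w - c) h
          simpa [add_sub_cancel_left] using this
        rw [this, norm_zero] at hn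
        exact ht0.ne hn
    · rintro z ⟨hz1, hz2⟩
      have hz0 : z - c ≠ 0 := sub_ne_zero.2 (by simpa [mem_singleton_iff] using hz2)
      have hn0 : (0 : ℝ) < ‖z - c‖ := norm_pos_iff.2 hz0
      refine ⟨(‖z - c‖, (‖z - c‖ : ℝ)⁻¹ • (z - c)), ⟨⟨hn0, ?_⟩, ?_⟩, ?_⟩
      · simpa [mem_ball, dist_eq_norm] using hz1
      · simp only [mem_sphere_iff_norm, sub_zero, norm_smul, norm_inv, norm_norm]
        exact inv_mul_cancel₀ hn0.ne'
      · show c + ‖z - c‖ • (‖z - c‖⁻¹ • (z - c)) = z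
        rw [smul_smul, mul_inv_cancel₀ hn0.ne', one_smul]
        abel
  rw [← himg]
  exact hprod.image _ hcont.continuousOn

/-- A function with vanishing derivative on a preconnected open set is constant. -/
lemma const_of_zero_fderiv {H : ℂ → ℝ} {s : Set ℂ} (hso : IsOpen s) (hsc : IsPreconnected s)
    (hH : ∀ z ∈ s, HasFDerivAt H (0 : ℂ →L[ℝ] ℝ) z) {x y : ℂ} (hx : x ∈ s) (hy : y ∈ s) :
    H x = H y := by
  have ballconst : ∀ w : ℂ, ∀ ε > (0 : ℝ), ball w ε ⊆ s → ∀ z ∈ ball w ε, H z = H w := by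
    intro w ε hε hsub z hz
    have hdiff : DifferentiableOn ℝ H (ball w ε) := fun y hy =>
      ((hH y (hsub hy)).differentiableAt).differentiableWithinAt
    refine (convex_ball w ε).is_const_of_fderivWithin_eq_zero hdiff ?_ hz (mem_ball_self hε)
    intro y hy
    rw [fderivWithin_of_isOpen isOpen_ball hy]
    exact (hH y (hsub hy)).fderiv
  set u := {w : ℂ | ∃ ε > (0 : ℝ), ball w ε ⊆ s ∧ ∀ z ∈ ball w ε, H z = H x} with hu_def
  set v := {w : ℂ | ∃ ε > (0 : ℝ), ball w ε ⊆ s ∧ ∀ z ∈ ball w ε, H z ≠ H x} with hv_def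
  have hshrink : ∀ (w w' : ℂ) (ε : ℝ), w' ∈ ball w ε → ∃ ε' > (0 : ℝ),
      ball w' ε' ⊆ ball w ε := by
    intro w w' ε hw'
    refine ⟨ε - dist w' w, by simpa [sub_pos] using hw', ball_subset_ball' (by ring_nf; rfl)⟩
  have hu : IsOpen u := by
    rw [Metric.isOpen_iff]
    rintro w ⟨ε, hε, hsub, hconst⟩
    refine ⟨ε, hε, fun w' hw' => ?_⟩
    obtain ⟨ε', hε', hsub'⟩ := hshrink w w' ε hw'
    exact ⟨ε', hε', hsub'.trans hsub, fun z hz => hconst z (hsub' hz)⟩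
  have hv : IsOpen v := by
    rw [Metric.isOpen_iff]
    rintro w ⟨ε, hε, hsub, hconst⟩
    refine ⟨ε, hε, fun w' hw' => ?_⟩
    obtain ⟨ε', hε', hsub'⟩ := hshrink w w' ε hw'
    exact ⟨ε', hε', hsub'.trans hsub, fun z hz => hconst z (hsub' hz)⟩
  have hsuv : s ⊆ u ∪ v := by
    intro w hw
    obtain ⟨ε, hε, hsub⟩ := Metric.isOpen_iff.1 hso w hw
    by_cases h : H w = H x
    · exact Or.inl ⟨ε, hε, hsub, fun z hz => (ballconst w ε hε hsub z hz).trans h⟩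
    · exact Or.inr ⟨ε, hε, hsub, fun z hz => by rw [ballconst w ε hε hsub z hz]; exact h⟩
  by_contra hne
  have hxu : x ∈ s ∩ u := by
    obtain ⟨ε, hε, hsub⟩ := Metric.isOpen_iff.1 hso x hx
    exact ⟨hx, ε, hε, hsub, fun z hz => ballconst x ε hε hsub z hz⟩
  have hyv : y ∈ s ∩ v := by
    obtain ⟨ε, hε, hsub⟩ := Metric.isOpen_iff.1 hso y hy
    refine ⟨hy, ε, hε, hsub, fun z hz => ?_⟩
    rw [ballconst y ε hε hsub z hz]
    exact fun hc => hne hc.symm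
  obtain ⟨w, _, hwu, hwv⟩ := hsc u v hu hv hsuv ⟨x, hxu⟩ ⟨y, hyv⟩
  obtain ⟨ε, hε, _, hcu⟩ := hwu
  obtain ⟨ε', hε', _, hcv⟩ := hwv
  exact hcv w (mem_ball_self hε') (hcu w (mem_ball_self hε))

/-- The real part of a holomorphic function (plus a constant) is `C²` and harmonic. -/
lemma re_holo_harmonic {F : ℂ → ℂ} {c : ℂ} {ρ : ℝ} (hρ : 0 < ρ)
    (hF : DifferentiableOn ℂ F (ball c ρ)) (k : ℝ) :
    ContDiffOn ℝ 2 (fun w => (F w).re + k) (ball c ρ) ∧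
      ∀ w ∈ ball c ρ, lap (fun w => (F w).re + k) w = 0 := by
  have han : AnalyticOnNhd ℂ F (ball c ρ) := hF.analyticOnNhd isOpen_ball
  have hCc : ContDiffOn ℂ 2 F (ball c ρ) := han.contDiffOn_of_completeSpace
  have hCR : ContDiffOn ℝ 2 F (ball c ρ) := hCc.restrict_scalars ℝ
  have hF'an : AnalyticOnNhd ℂ (deriv F) (ball c ρ) := han.deriv
  have hF'd : ∀ y ∈ ball c ρ, HasDerivAt F (deriv F y) y := fun y hy =>
    ((hF y hy).differentiableAt (isOpen_ball.mem_nhds hy)).hasDerivAt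
  constructor
  · exact (Complex.reCLM.contDiff.comp_contDiffOn hCR).add contDiffOn_const
  intro w hw
  have hF'' : HasDerivAt (deriv F) (deriv (deriv F) w) w :=
    ((hF'an w hw).differentiableAt).hasDerivAt
  set d2 := deriv (deriv F) w with hd2
  have hpx_eq : EqOn (px (fun w => (F w).re + k)) (fun y => (deriv F y).re) (ball c ρ) := by
    intro y hy
    have h1 : HasFDerivAt (fun w => (F w).re + k)
        (Complex.reCLM.comp ((ContinuousLinearMap.smulRight (1 : ℂ →L[ℂ] ℂ)
          (deriv F y)).restrictScalars ℝ)) y :=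
      (Complex.reCLM.hasFDerivAt.comp y
        (((hF'd y hy).hasFDerivAt).restrictScalars ℝ)).add_const k
    show px (fun w => (F w).re + k) y = (deriv F y).re
    rw [px, h1.fderiv]
    simp
  have hpy_eq : EqOn (py (fun w => (F w).re + k)) (fun y => -((deriv F y).im)) (ball c ρ) := by
    intro y hy
    have h1 : HasFDerivAt (fun w => (F w).re + k)
        (Complex.reCLM.comp ((ContinuousLinearMap.smulRight (1 : ℂ →L[ℂ] ℂ)
          (deriv F y)).restrictScalars ℝ)) y :=
      (Complex.reCLM.hasFDerivAt.comp y
        (((hF'd y hy).hasFDerivAt).restrictScalars ℝ)).add_const k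
    show py (fun w => (F w).re + k) y = -((deriv F y).im)
    rw [py, h1.fderiv]
    simp [Complex.mul_re]
  have h2x : HasFDerivAt (fun y => (deriv F y).re)
      (Complex.reCLM.comp ((ContinuousLinearMap.smulRight (1 : ℂ →L[ℂ] ℂ)
        d2).restrictScalars ℝ)) w :=
    Complex.reCLM.hasFDerivAt.comp w ((hF''.hasFDerivAt).restrictScalars ℝ)
  have h2y : HasFDerivAt (fun y => -((deriv F y).im))
      (-(Complex.imCLM.comp ((ContinuousLinearMap.smulRight (1 : ℂ →L[ℂ] ℂ)
        d2).restrictScalars ℝ))) w :=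
    (Complex.imCLM.hasFDerivAt.comp w ((hF''.hasFDerivAt).restrictScalars ℝ)).neg
  have e1 : fderiv ℝ (px (fun w => (F w).re + k)) w
      = fderiv ℝ (fun y => (deriv F y).re) w :=
    (Filter.eventuallyEq_of_mem (isOpen_ball.mem_nhds hw) hpx_eq).fderiv_eq
  have e2 : fderiv ℝ (py (fun w => (F w).re + k)) w
      = fderiv ℝ (fun y => -((deriv F y).im)) w :=
    (Filter.eventuallyEq_of_mem (isOpen_ball.mem_nhds hw) hpy_eq).fderiv_eq
  rw [lap, e1, e2, h2x.fderiv, h2y.fderiv]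
  simp [Complex.mul_re, Complex.mul_im]

/-- `lap` only depends on local values. -/
lemma lap_congr {u v : ℂ → ℝ} {s : Set ℂ} (hs : IsOpen s) (h : EqOn u v s) :
    ∀ w ∈ s, lap u w = lap v w := by
  have hx : EqOn (px u) (px v) s := by
    intro y hy
    have hev : u =ᶠ[𝓝 y] v := Filter.eventuallyEq_of_mem (hs.mem_nhds hy) h
    show px u y = px v y
    rw [px, px, hev.fderiv_eq]
  have hy' : EqOn (py u) (py v) s := by
    intro y hy
    have hev : u =ᶠ[𝓝 y] v := Filter.eventuallyEq_of_mem (hs.mem_nhds hy) h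
    show py u y = py v y
    rw [py, py, hev.fderiv_eq]
  intro w hw
  have e1 : fderiv ℝ (px u) w = fderiv ℝ (px v) w :=
    (Filter.eventuallyEq_of_mem (hs.mem_nhds hw) hx).fderiv_eq
  have e2 : fderiv ℝ (py u) w = fderiv ℝ (py v) w :=
    (Filter.eventuallyEq_of_mem (hs.mem_nhds hw) hy').fderiv_eq
  rw [lap, lap, e1, e2]

/-- The standard isometry between `ℂ` and `R2`. -/
def m : ℂ ≃ₗᵢ[ℝ] R2 := Complex.isometryOfOrthonormal (EuclideanSpace.basisFun (Fin 2) ℝ)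

lemma m_one : m 1 = EuclideanSpace.single 0 1 := by
  simp [m, Complex.isometryOfOrthonormal_apply, EuclideanSpace.basisFun_apply]
lemma m_I : m Complex.I = EuclideanSpace.single 1 1 := by
  simp [m, Complex.isometryOfOrthonormal_apply, EuclideanSpace.basisFun_apply]

/-- Transfer of the Laplacian through the isometry `m`. -/
lemma lap_transfer {g : R2 → ℝ} {O : Set R2} (hO : IsOpen O) (hg : ContDiffOn ℝ 2 g O)
    {x : R2} (hx : x ∈ O) :
    lap (g ∘ m) (m.symm x) = pd 0 (pd 0 g) x + pd 1 (pd 1 g) x := by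
  set mCLM : ℂ →L[ℝ] R2 := m.toLinearIsometry.toContinuousLinearMap with hmCLM
  have hmco : ⇑mCLM = ⇑m := rfl
  have hmfd : ∀ w : ℂ, HasFDerivAt (⇑m) mCLM w := fun w => mCLM.hasFDerivAt
  set O' : Set ℂ := ⇑m ⁻¹' O with hO'def
  have hO' : IsOpen O' := hO.preimage m.continuous
  have hw0 : m.symm x ∈ O' := by
    simp only [hO'def, mem_preimage, m.apply_symm_apply]
    exact hx
  have hgd : ∀ y ∈ O, DifferentiableAt ℝ g y := fun y hy =>
    ((hg.differentiableOn (by norm_num)) y hy).differentiableAt (hO.mem_nhds hy)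
  have hapx : EqOn (px (g ∘ ⇑m)) ((pd 0 g) ∘ ⇑m) O' := by
    intro w hw
    have hc := ((hgd (m w) hw).hasFDerivAt).comp w (hmfd w)
    show px (g ∘ ⇑m) w = pd 0 g (m w)
    rw [px, hc.fderiv]
    show fderiv ℝ g (m w) (mCLM 1) = fderiv ℝ g (m w) (EuclideanSpace.single 0 1)
    rw [show mCLM (1 : ℂ) = EuclideanSpace.single 0 1 from m_one]
  have hapy : EqOn (py (g ∘ ⇑m)) ((pd 1 g) ∘ ⇑m) O' := by
    intro w hw
    have hc := ((hgd (m w) hw).hasFDerivAt).comp w (hmfd w)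
    show py (g ∘ ⇑m) w = pd 1 g (m w)
    rw [py, hc.fderiv]
    show fderiv ℝ g (m w) (mCLM Complex.I) = fderiv ℝ g (m w) (EuclideanSpace.single 1 1)
    rw [show mCLM Complex.I = EuclideanSpace.single 1 1 from m_I]
  have hg1 : ContDiffOn ℝ 1 (fderiv ℝ g) O := hg.fderiv_of_isOpen hO (by norm_num)
  have hpd_diff : ∀ i : Fin 2, HasFDerivAt (pd i g)
      ((ContinuousLinearMap.apply ℝ ℝ (EuclideanSpace.single i 1)).comp
        (fderiv ℝ (fderiv ℝ g) x)) x := by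
    intro i
    exact ((ContinuousLinearMap.apply ℝ ℝ (EuclideanSpace.single i 1)).hasFDerivAt).comp x
      ((((hg1.differentiableOn one_ne_zero) x hx).differentiableAt (hO.mem_nhds hx)).hasFDerivAt)
  have hxx : m (m.symm x) = x := m.apply_symm_apply x
  have ex : fderiv ℝ (px (g ∘ ⇑m)) (m.symm x) 1 = pd 0 (pd 0 g) x := by
    have he : fderiv ℝ (px (g ∘ ⇑m)) (m.symm x) = fderiv ℝ ((pd 0 g) ∘ ⇑m) (m.symm x) :=
      (Filter.eventuallyEq_of_mem (hO'.mem_nhds hw0) hapx).fderiv_eq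
    have h1 : HasFDerivAt (pd 0 g) (fderiv ℝ (pd 0 g) x) (m (m.symm x)) := by
      rw [hxx]
      exact (hpd_diff 0).differentiableAt.hasFDerivAt
    have hc := h1.comp (m.symm x) (hmfd (m.symm x))
    rw [he, hc.fderiv]
    show fderiv ℝ (pd 0 g) x (mCLM 1) = pd 0 (pd 0 g) x
    rw [show mCLM (1 : ℂ) = EuclideanSpace.single 0 1 from m_one]
    rfl
  have ey : fderiv ℝ (py (g ∘ ⇑m)) (m.symm x) Complex.I = pd 1 (pd 1 g) x := by
    have he : fderiv ℝ (py (g ∘ ⇑m)) (m.symm x) = fderiv ℝ ((pd 1 g) ∘ ⇑m) (m.symm x) :=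
      (Filter.eventuallyEq_of_mem (hO'.mem_nhds hw0) hapy).fderiv_eq
    have h1 : HasFDerivAt (pd 1 g) (fderiv ℝ (pd 1 g) x) (m (m.symm x)) := by
      rw [hxx]
      exact (hpd_diff 1).differentiableAt.hasFDerivAt
    have hc := h1.comp (m.symm x) (hmfd (m.symm x))
    rw [he, hc.fderiv]
    show fderiv ℝ (pd 1 g) x (mCLM Complex.I) = pd 1 (pd 1 g) x
    rw [show mCLM Complex.I = EuclideanSpace.single 1 1 from m_I]
    rfl
  rw [lap, ex, ey]

end HarmonicAux

open HarmonicAux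

/-- a function continuous on an open set `U ⊆ ℝ²` and harmonic away from a
single point `x₀ ∈ U` is harmonic on all of `U`. -/
theorem harmonic_of_harmonic_off_point
    (U : Set R2) (hU : IsOpen U) (x₀ : R2) (hx₀ : x₀ ∈ U)
    (g : R2 → ℝ) (hcont : ContinuousOn g U)
    (hharm : HarmonicOnSet (U \ {x₀}) g) :
    HarmonicOnSet U g := by
  classical
  set G : ℂ → ℝ := g ∘ ⇑m with hGdef
  set c₀ : ℂ := m.symm x₀ with hc₀
  set W : Set ℂ := ⇑m ⁻¹' U with hWdef
  have hW : IsOpen W := hU.preimage m.continuous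
  have hc₀W : c₀ ∈ W := by
    simp only [hWdef, mem_preimage, hc₀, m.apply_symm_apply]
    exact hx₀
  have hmTo : MapsTo ⇑m (W \ {c₀}) (U \ {x₀}) := by
    rintro w ⟨hw1, hw2⟩
    refine ⟨hw1, ?_⟩
    simp only [mem_singleton_iff] at hw2 ⊢
    intro h
    exact hw2 (by rw [hc₀, ← h, m.symm_apply_apply])
  have hmC : ContDiff ℝ 2 (⇑m) := m.toLinearIsometry.toContinuousLinearMap.contDiff
  have hmC' : ContDiff ℝ 2 (⇑m.symm) :=
    m.symm.toLinearIsometry.toContinuousLinearMap.contDiff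
  have hG2 : ContDiffOn ℝ 2 G (W \ {c₀}) := hharm.1.comp hmC.contDiffOn hmTo
  have hUopen : IsOpen (U \ {x₀}) := hU.sdiff isClosed_singleton
  have hlapG : ∀ w ∈ W \ {c₀}, lap G w = 0 := by
    intro w hw
    have hx' : m w ∈ U \ {x₀} := hmTo hw
    have ht := lap_transfer hUopen hharm.1 hx'
    rw [m.symm_apply_apply] at ht
    rw [hGdef, ht]
    exact hharm.2 (m w) hx'
  obtain ⟨δ₀, hδ₀pos, hδ₀sub⟩ := Metric.isOpen_iff.1 hW c₀ hc₀W
  set f : ℂ → ℂ := hol G with hfdef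
  have hpball : ball c₀ δ₀ \ {c₀} ⊆ W \ {c₀} := fun w hw => ⟨hδ₀sub hw.1, hw.2⟩
  have hfd : DifferentiableOn ℂ f (ball c₀ δ₀ \ {c₀}) :=
    differentiableOn_hol (isOpen_ball.sdiff isClosed_singleton)
      (hG2.mono hpball) (fun w hw => hlapG w (hpball hw))
  have hGc : ContinuousOn G W := hcont.comp m.continuous.continuousOn (fun w hw => hw)
  have hGc₀ : ContinuousAt G c₀ := hGc.continuousAt (hW.mem_nhds hc₀W)
  have hGdiff : ∀ y ∈ W \ {c₀}, DifferentiableAt ℝ G y := by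
    intro y hy
    exact ((hG2.differentiableOn (by norm_num)) y hy).differentiableAt
      ((hW.sdiff isClosed_singleton).mem_nhds hy)
  -- the little-o estimate
  have ho : (fun z => f z - f c₀) =o[𝓝[≠] c₀] fun z => (z - c₀)⁻¹ := by
    have h1 : f =o[𝓝[≠] c₀] fun z => (z - c₀)⁻¹ := by
      rw [Asymptotics.isLittleO_iff]
      intro C hC
      obtain ⟨δ, hδpos, hδ⟩ := Metric.continuousAt_iff.1 hGc₀ (C / 12) (by positivity)
      set δ₁ : ℝ := min δ δ₀ with hδ₁def
      have hδ₁pos : 0 < δ₁ := lt_min hδpos hδ₀pos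
      have hev1 : ∀ᶠ z in 𝓝[≠] c₀, z ∈ ball c₀ (δ₁ / 2) :=
        eventually_nhdsWithin_of_eventually_nhds
          ((isOpen_ball.eventually_mem (mem_ball_self (by positivity))))
      have hev2 : ∀ᶠ z in 𝓝[≠] c₀, z ≠ c₀ := by
        filter_upwards [self_mem_nhdsWithin] with z hz
        simpa using hz
      filter_upwards [hev1, hev2] with z hzball hzne
      have hzn : 0 < ‖z - c₀‖ := norm_pos_iff.2 (sub_ne_zero.2 hzne)
      have hzlt : ‖z - c₀‖ < δ₁ / 2 := by
        rw [mem_ball, dist_eq_norm] at hzball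
        exact hzball
      set s : ℝ := ‖z - c₀‖ / 2 with hsdef
      have hs : 0 < s := by positivity
      have hsub : closedBall z s ⊆ ball c₀ δ₁ \ {c₀} := by
        intro w hw
        rw [mem_closedBall, dist_eq_norm] at hw
        constructor
        · rw [mem_ball, dist_eq_norm]
          calc ‖w - c₀‖ ≤ ‖w - z‖ + ‖z - c₀‖ := norm_sub_le_norm_sub_add_norm_sub w z c₀
            _ ≤ s + ‖z - c₀‖ := by linarith
            _ < δ₁ := by rw [hsdef]; linarith
        · simp only [mem_singleton_iff]
          intro h
          rw [h, norm_sub_rev] at hw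
          have h2s : ‖z - c₀‖ = 2 * s := by rw [hsdef]; ring
          linarith
      have hsubd : closedBall z s ⊆ ball c₀ δ₀ \ {c₀} := by
        refine hsub.trans ?_
        rintro w ⟨hw1, hw2⟩
        exact ⟨ball_subset_ball (min_le_right δ δ₀) hw1, hw2⟩
      have hfz : DifferentiableOn ℂ f (closedBall z s) := hfd.mono hsubd
      have hsnn : ((s.toNNReal : ℝ≥0) : ℝ) = s := Real.coe_toNNReal _ hs.le
      obtain ⟨F, hF⟩ := exists_primitive (R := s.toNNReal)
        (by simpa using hs) (by rw [hsnn]; exact hfz)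
      rw [hsnn] at hF
      have hballW : ball z s ⊆ W \ {c₀} := fun w hw =>
        hpball (hsubd (ball_subset_closedBall hw))
      have hH : ∀ y ∈ ball z s, HasFDerivAt (fun w => G w - (F w).re) (0 : ℂ →L[ℝ] ℝ) y := by
        intro y hy
        exact hasFDerivAt_sub_re_zero (hGdiff y (hballW hy)) (hF y hy)
      have hzmem : z ∈ ball z s := mem_ball_self hs
      have hcon : ∀ y ∈ ball z s, (F y - F z).re = G y - G z := by
        intro y hy
        have := const_of_zero_fderiv isOpen_ball (convex_ball z s).isPreconnected hH hy hzmem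
        rw [Complex.sub_re]
        linarith
      have hzd : dist z c₀ < δ := by
        rw [dist_eq_norm]
        calc ‖z - c₀‖ < δ₁ / 2 := hzlt
          _ ≤ δ₁ := by linarith
          _ ≤ δ := min_le_left _ _
      have hGz : dist (G z) (G c₀) < C / 12 := hδ hzd
      have hRe : ∀ y ∈ ball z s, (F y - F z).re ≤ C / 6 := by
        intro y hy
        rw [hcon y hy]
        have hyball : y ∈ ball c₀ δ₁ := (hsub (ball_subset_closedBall hy)).1
        have hyd : dist y c₀ < δ := lt_of_lt_of_le (mem_ball.1 hyball) (min_le_left _ _)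
        have hGy : dist (G y) (G c₀) < C / 12 := hδ hyd
        rw [Real.dist_eq] at hGy hGz
        have e1 := le_abs_self (G y - G c₀)
        have e2 := neg_abs_le (G z - G c₀)
        linarith
      have hFd : DifferentiableOn ℂ F (ball z s) := fun y hy =>
        (hF y hy).differentiableAt.differentiableWithinAt
      have hbound := norm_deriv_le_of_re_le hs (by positivity : (0 : ℝ) < C / 6)
        hFd hRe (hF z hzmem)
      rw [norm_inv]
      calc ‖f z‖ ≤ 3 * (C / 6) / s := hbound
        _ = C * ‖z - c₀‖⁻¹ := by
            rw [hsdef]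
            field_simp
            ring
    have h2 : (fun _ : ℂ => f c₀) =o[𝓝[≠] c₀] fun z => (z - c₀)⁻¹ := by
      rw [Asymptotics.isLittleO_const_left]
      right
      have hnorm : Tendsto (fun z : ℂ => ‖z - c₀‖) (𝓝[≠] c₀) (𝓝[>] 0) := by
        rw [tendsto_nhdsWithin_iff]
        constructor
        · have hco : Continuous fun z : ℂ => ‖z - c₀‖ :=
            (continuous_id.sub continuous_const).norm
          have h0 := hco.tendsto c₀
          simp only [sub_self, norm_zero] at h0
          exact h0.mono_left nhdsWithin_le_nhds
        · filter_upwards [self_mem_nhdsWithin] with z hz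
          exact norm_pos_iff.2 (sub_ne_zero.2 (by simpa using hz))
      have hinv := hnorm.inv_tendsto_nhdsGT_zero
      have : (Norm.norm ∘ fun z : ℂ => (z - c₀)⁻¹) = fun z : ℂ => (‖z - c₀‖)⁻¹ := by
        funext z
        simp [norm_inv]
      rw [this]
      exact hinv
    simpa using h1.sub h2
  -- removable singularity
  have hnb : ball c₀ δ₀ ∈ 𝓝 c₀ := isOpen_ball.mem_nhds (mem_ball_self hδ₀pos)
  have hftd : DifferentiableOn ℂ (Function.update f c₀ (limUnder (𝓝[≠] c₀) f))
      (ball c₀ δ₀) :=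
    Complex.differentiableOn_update_limUnder_of_isLittleO hnb hfd ho
  set ft := Function.update f c₀ (limUnder (𝓝[≠] c₀) f) with hftdef
  set ρ : ℝ := δ₀ / 2 with hρdef
  have hρpos : 0 < ρ := by positivity
  have hρnn : ((ρ.toNNReal : ℝ≥0) : ℝ) = ρ := Real.coe_toNNReal _ hρpos.le
  have hcb : closedBall c₀ ρ ⊆ ball c₀ δ₀ := by
    intro w hw
    rw [mem_closedBall] at hw
    rw [mem_ball]
    rw [hρdef] at hw
    linarith
  obtain ⟨F, hF⟩ := exists_primitive (R := ρ.toNNReal) (by simpa using hρpos)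
    (by rw [hρnn]; exact hftd.mono hcb)
  rw [hρnn] at hF
  have hρball : ball c₀ ρ ⊆ ball c₀ δ₀ := ball_subset_ball (by rw [hρdef]; linarith)
  have hHz : ∀ y ∈ ball c₀ ρ \ {c₀},
      HasFDerivAt (fun w => G w - (F w).re) (0 : ℂ →L[ℝ] ℝ) y := by
    intro y hy
    have hyW : y ∈ W \ {c₀} := hpball ⟨hρball hy.1, hy.2⟩
    have hFy := hF y hy.1
    have hfy : ft y = hol G y := by
      rw [hftdef, Function.update_of_ne (by simpa using hy.2)]
    rw [hfy] at hFy
    exact hasFDerivAt_sub_re_zero (hGdiff y hyW) hFy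
  set z₁ : ℂ := c₀ + ((ρ / 2 : ℝ) : ℂ) with hz₁def
  have hz₁ : z₁ ∈ ball c₀ ρ \ {c₀} := by
    constructor
    · rw [mem_ball, dist_eq_norm, hz₁def, add_sub_cancel_left, Complex.norm_real,
        Real.norm_eq_abs, abs_of_pos (by positivity)]
      linarith
    · simp only [hz₁def, mem_singleton_iff, add_eq_left]
      intro h
      have : (ρ / 2 : ℝ) = 0 := by exact_mod_cast h
      linarith
  set k : ℝ := G z₁ - (F z₁).re with hkdef
  have hk : ∀ y ∈ ball c₀ ρ \ {c₀}, G y - (F y).re = k :=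
    fun y hy => const_of_zero_fderiv (isOpen_ball.sdiff isClosed_singleton)
      (isPreconnected_punctured_ball c₀ ρ) hHz hy hz₁
  have hkc : G c₀ - (F c₀).re = k := by
    haveI : (𝓝[≠] (c₀ : ℂ)).NeBot := NormedField.nhdsNE_neBot c₀
    have hFc : ContinuousAt F c₀ :=
      (hF c₀ (mem_ball_self hρpos)).differentiableAt.continuousAt
    have hcontH : ContinuousAt (fun y => G y - (F y).re) c₀ :=
      hGc₀.sub (Complex.continuous_re.continuousAt.comp hFc)
    have ht1 : Tendsto (fun y => G y - (F y).re) (𝓝[≠] c₀) (𝓝 (G c₀ - (F c₀).re)) :=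
      hcontH.tendsto.mono_left nhdsWithin_le_nhds
    have ht2 : Tendsto (fun y => G y - (F y).re) (𝓝[≠] c₀) (𝓝 k) := by
      apply Tendsto.congr' _ tendsto_const_nhds
      have hmem : ball c₀ ρ \ {c₀} ∈ 𝓝[≠] c₀ :=
        diff_mem_nhdsWithin_compl (isOpen_ball.mem_nhds (mem_ball_self hρpos)) _
      exact Filter.eventuallyEq_of_mem hmem (fun y hy => (hk y hy).symm)
    exact tendsto_nhds_unique ht1 ht2
  have hGF : ∀ y ∈ ball c₀ ρ, G y = (F y).re + k := by
    intro y hy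
    by_cases h : y = c₀
    · subst h
      linarith
    · linarith [hk y ⟨hy, h⟩]
  have hFball : DifferentiableOn ℂ F (ball c₀ ρ) := fun y hy =>
    (hF y hy).differentiableAt.differentiableWithinAt
  obtain ⟨hC2u, hlapu⟩ := re_holo_harmonic hρpos hFball k
  have hGC2 : ContDiffOn ℝ 2 G (ball c₀ ρ) := hC2u.congr hGF
  have hlapG0 : ∀ w ∈ ball c₀ ρ, lap G w = 0 := by
    intro w hw
    rw [lap_congr isOpen_ball hGF w hw]
    exact hlapu w hw
  set O₀ : Set R2 := ⇑m.symm ⁻¹' (ball c₀ ρ) with hO₀def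
  have hO₀ : IsOpen O₀ := isOpen_ball.preimage m.symm.continuous
  have hx₀O : x₀ ∈ O₀ := by
    simp only [hO₀def, mem_preimage, ← hc₀]
    exact mem_ball_self hρpos
  have hgsymm : ∀ x : R2, (G ∘ ⇑m.symm) x = g x := by
    intro x
    simp [hGdef, Function.comp, m.apply_symm_apply]
  have hgO : ContDiffOn ℝ 2 g O₀ := by
    have hcomp : ContDiffOn ℝ 2 (G ∘ ⇑m.symm) O₀ :=
      hGC2.comp hmC'.contDiffOn (fun x hx => hx)
    exact hcomp.congr (fun x _ => (hgsymm x).symm)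
  constructor
  · apply contDiffOn_of_locally_contDiffOn
    intro x hx
    by_cases hxx : x = x₀
    · exact ⟨O₀, hO₀, hxx ▸ hx₀O, hgO.mono inter_subset_right⟩
    · refine ⟨{x₀}ᶜ, isOpen_compl_singleton, hxx, ?_⟩
      exact hharm.1.mono (fun y hy => ⟨hy.1, hy.2⟩)
  · intro x hx
    by_cases hxx : x = x₀
    · subst hxx
      have ht := lap_transfer hO₀ hgO hx₀O
      rw [← ht, ← hGdef, ← hc₀]
      exact hlapG0 c₀ (mem_ball_self hρpos)
    · exact hharm.2 x ⟨hx, hxx⟩
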